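/- Let G be a graph, let u, v be adjacent vertices of G, and let G_{u→v} be the Kelmans transformation of G from u to v. Then the number of vertices in a longest path of G_{u→v} is at most the number of vertices in a longest path of G, i.e., p(G_{u→v}) ≤ p(G). -/

import Mathlib

variable {V : Type*}

/-- `kelmansP G u v = P_v(u)`: the neighbors of `u` other than `v` that are
not neighbors of `v`. -/
def kelmansP (G : SimpleGraph V) (u v : V) : Set V :=
  {w | G.Adj u w ∧ w ≠ v ∧ ¬ G.Adj v w}

/-- The Kelmans transformation `G_{u→v}`: delete the edges from `u` to the
vertices of `P_v(u)` and add edges from `v` to the vertices of `P_v(u)`. -/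
def kelmans (G : SimpleGraph V) (u v : V) : SimpleGraph V where
  Adj x y :=
    (G.Adj x y ∧ ¬(x = u ∧ y ∈ kelmansP G u v) ∧ ¬(y = u ∧ x ∈ kelmansP G u v)) ∨
      (x = v ∧ y ∈ kelmansP G u v) ∨ (y = v ∧ x ∈ kelmansP G u v)
  symm := by
    constructor
    intro x y h
    rcases h with ⟨h1, h2, h3⟩ | h | h
    · exact Or.inl ⟨h1.symm, h3, h2⟩
    · exact Or.inr (Or.inr h)
    · exact Or.inr (Or.inl h)
  loopless := by
    constructor
    intro x h
    rcases h with ⟨h, -⟩ | ⟨rfl, -, h, -⟩ | ⟨rfl, -, h, -⟩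
    · exact G.irrefl h
    · exact h rfl
    · exact h rfl

/-- The circumference of a graph: the length of a longest cycle
(`0` if there is no cycle). -/
noncomputable def circumference (G : SimpleGraph V) : ℕ :=
  sSup {n | ∃ (u : V) (c : G.Walk u u), c.IsCycle ∧ c.length = n}

/-- The number of vertices of a longest path of `G`. -/
noncomputable def longestPathVerts (G : SimpleGraph V) : ℕ :=
  sSup {n | ∃ (u v : V) (p : G.Walk u v), p.IsPath ∧ p.length + 1 = n}

section lemmas
variable {G : SimpleGraph V} {u v : V}

lemma kel_E1 {x y : V} (h : (kelmans G u v).Adj x y) (hx : x ≠ v) (hy : y ≠ v) :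
    G.Adj x y := by
  rcases h with ⟨h, -⟩ | ⟨rfl, -⟩ | ⟨rfl, -⟩
  · exact h
  · exact absurd rfl hx
  · exact absurd rfl hy

lemma kel_E2 {w : V} (h : (kelmans G u v).Adj v w) (hvw : ¬ G.Adj v w) : G.Adj u w := by
  rcases h with ⟨h, -⟩ | ⟨-, h1, -⟩ | ⟨rfl, -, h2, -⟩
  · exact absurd h hvw
  · exact h1
  · exact absurd rfl h2

lemma kel_E3 (huv : G.Adj u v) {w : V} (h : (kelmans G u v).Adj u w) (hw : w ≠ v) :
    G.Adj u w ∧ G.Adj v w := by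
  rcases h with ⟨h1, h2, -⟩ | ⟨he, -⟩ | ⟨he, -⟩
  · refine ⟨h1, ?_⟩
    by_contra hvw
    exact h2 ⟨rfl, h1, hw, hvw⟩
  · exact absurd he huv.ne
  · exact absurd he hw

lemma chain'_imp_mem {α : Type*} {R S : α → α → Prop} :
    ∀ {l : List α}, l.Chain' R → (∀ a ∈ l, ∀ b ∈ l, R a b → S a b) → l.Chain' S
  | [] , _, _ => List.isChain_nil
  | [_], _, _ => List.isChain_singleton _
  | _ :: _ :: _, h, H => by
    rw [List.Chain', List.isChain_cons_cons] at h ⊢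
    exact ⟨H _ (by simp) _ (by simp) h.1,
      chain'_imp_mem h.2 (fun x hx y hy => H x (by simp [hx]) y (by simp [hy]))⟩

lemma kel_chain_avoid {l : List V} (hc : l.Chain' (kelmans G u v).Adj) (hv : v ∉ l) :
    l.Chain' G.Adj :=
  chain'_imp_mem hc (fun a ha b hb h => kel_E1 h (fun e => hv (e ▸ ha)) (fun e => hv (e ▸ hb)))

lemma chain'_reverse_adj {l : List V} (hc : l.Chain' G.Adj) : l.reverse.Chain' G.Adj := by
  rw [List.Chain', List.isChain_reverse]
  exact chain'_imp_mem hc (fun a _ b _ h => h.symm)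

lemma nodup_of_perm_coe {l l' : List V} (h : (↑l : Multiset V) = ↑l') (hn : l.Nodup) :
    l'.Nodup :=
  (Multiset.coe_eq_coe.mp h).nodup hn

/-- Glue a path `A ++ x :: (M ++ y :: D)` from its parts. -/
lemma chain'_glue {A M D : List V} {x y : V}
    (hA : A.Chain' G.Adj) (hM : M.Chain' G.Adj) (hD : D.Chain' G.Adj)
    (hAx : ∀ a ∈ A.getLast?, G.Adj a x)
    (hxM : ∀ b ∈ M.head?, G.Adj x b)
    (hMy : ∀ b ∈ M.getLast?, G.Adj b y)
    (hxy : M = [] → G.Adj x y)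
    (hyD : ∀ d ∈ D.head?, G.Adj y d) :
    (A ++ x :: (M ++ y :: D)).Chain' G.Adj := by
  rw [List.Chain', List.isChain_append]
  refine ⟨hA, ?_, by simpa using hAx⟩
  rw [List.isChain_cons]
  constructor
  · intro b hb
    rw [List.head?_append] at hb
    rcases hM' : M.head? with _ | m
    · rw [hM'] at hb
      simp only [Option.none_or, List.head?_cons, Option.mem_some_iff] at hb
      exact hb ▸ hxy (List.head?_eq_none_iff.mp hM')
    · rw [hM'] at hb
      have hbm : b = m := Option.mem_unique hb rfl
      exact hbm ▸ hxM m (by rw [hM']; rfl)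
  · rw [List.isChain_append]
    refine ⟨hM, List.isChain_cons.mpr ⟨hyD, hD⟩, ?_⟩
    intro m hm c hc
    simp only [List.head?_cons, Option.mem_some_iff] at hc
    exact hc ▸ hMy m hm

lemma exists_walk_of_list (G : SimpleGraph V) :
    ∀ (l : List V) (a : V), (a :: l).Chain' G.Adj → (a :: l).Nodup →
      ∃ (b : V) (q : G.Walk a b), q.IsPath ∧ q.support = a :: l := by
  intro l
  induction l with
  | nil => exact fun a _ _ => ⟨a, .nil, by simp, by simp⟩
  | cons c t ih =>
    intro a hc hn
    obtain ⟨b, q, hq, hs⟩ := ih c hc.tail hn.of_cons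
    have hadj : G.Adj a c := (List.isChain_cons_cons.mp hc).1
    refine ⟨b, .cons hadj q, hq.cons ?_, by simp [hs]⟩
    rw [hs]
    exact (List.nodup_cons.mp hn).1

lemma key' (huv : G.Adj u v) (A C : List V)
    (hc : (A ++ v :: C).Chain' (kelmans G u v).Adj)
    (hn : (A ++ v :: C).Nodup) (huA : u ∉ A) :
    ∃ l' : List V, l'.Chain' G.Adj ∧ l'.Nodup ∧ (A ++ v :: C).length ≤ l'.length := by
  have hdisj := List.disjoint_of_nodup_append hn
  have hvA : v ∉ A := fun h => hdisj h (by simp)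
  have hnVC : (v :: C).Nodup := hn.of_append_right
  have hvC : v ∉ C := (List.nodup_cons.mp hnVC).1
  rw [List.Chain', List.isChain_append] at hc
  obtain ⟨hcA, hcVC, hAv0⟩ := hc
  have hAv : ∀ x ∈ A.getLast?, (kelmans G u v).Adj x v := fun x hx => hAv0 x hx v rfl
  have hAg : A.Chain' G.Adj := kel_chain_avoid hcA hvA
  by_cases huC : u ∈ C
  case neg =>
    -- u ∉ C
    have hcC : C.Chain' (kelmans G u v).Adj := hcVC.tail
    have hCg : C.Chain' G.Adj := kel_chain_avoid hcC hvC
    have hVC : ∀ y ∈ C.head?, (kelmans G u v).Adj v y := (List.isChain_cons.mp hcVC).1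
    by_cases hL : ∀ x ∈ A.getLast?, G.Adj x v
    · by_cases hR : ∀ y ∈ C.head?, G.Adj v y
      · -- old, old : keep l
        refine ⟨A ++ v :: C, ?_, hn, le_rfl⟩
        rw [List.Chain', List.isChain_append]
        exact ⟨hAg, List.isChain_cons.mpr ⟨hR, hCg⟩, by simpa using hL⟩
      · -- old, new : A ++ v :: u :: C
        push_neg at hR
        obtain ⟨c, hcm, hcn⟩ := hR
        have hudc : G.Adj u c := kel_E2 (hVC c hcm) hcn
        refine ⟨A ++ v :: u :: C, ?_, ?_, by simp⟩
        · rw [List.Chain', List.isChain_append]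
          refine ⟨hAg, ?_, by simpa using hL⟩
          rw [List.isChain_cons_cons]
          refine ⟨huv.symm, List.isChain_cons.mpr ⟨?_, hCg⟩⟩
          intro y hy
          rw [Option.mem_unique hy hcm]
          exact hudc
        · refine nodup_of_perm_coe (l := u :: (A ++ v :: C)) ?_
            (List.Nodup.cons (by simp [huA, huC, huv.ne]) hn)
          simp only [← Multiset.cons_coe, ← Multiset.coe_add, ← Multiset.singleton_add]
          abel
    · push_neg at hL
      obtain ⟨a, ham, han⟩ := hL
      have huda : G.Adj u a := kel_E2 ((hAv a ham).symm) (fun h => han h.symm)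
      by_cases hR : ∀ y ∈ C.head?, G.Adj v y
      · -- new, old : A ++ u :: v :: C
        refine ⟨A ++ u :: v :: C, ?_, ?_, by simp⟩
        · rw [List.Chain', List.isChain_append]
          refine ⟨hAg, ?_, ?_⟩
          · rw [List.isChain_cons_cons]
            exact ⟨huv, List.isChain_cons.mpr ⟨hR, hCg⟩⟩
          · intro x hx y hy
            simp only [List.head?_cons, Option.mem_some_iff] at hy
            rw [← hy, Option.mem_unique hx ham]
            exact huda.symm
        · refine nodup_of_perm_coe (l := u :: (A ++ v :: C)) ?_
            (List.Nodup.cons (by simp [huA, huC, huv.ne]) hn)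
          simp only [← Multiset.cons_coe, ← Multiset.coe_add, ← Multiset.singleton_add]
          abel
      · -- new, new : A ++ u :: C
        push_neg at hR
        obtain ⟨c, hcm, hcn⟩ := hR
        have hudc : G.Adj u c := kel_E2 (hVC c hcm) hcn
        have hnAC : (A ++ C).Nodup :=
          List.Nodup.sublist ((List.sublist_cons_self v C).append_left A) hn
        refine ⟨A ++ u :: C, ?_, ?_, by simp⟩
        · rw [List.Chain', List.isChain_append]
          refine ⟨hAg, List.isChain_cons.mpr ⟨?_, hCg⟩, ?_⟩
          · intro y hy
            rw [Option.mem_unique hy hcm]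
            exact hudc
          · intro x hx y hy
            simp only [List.head?_cons, Option.mem_some_iff] at hy
            rw [← hy, Option.mem_unique hx ham]
            exact huda.symm
        · refine nodup_of_perm_coe (l := u :: (A ++ C)) ?_
            (List.Nodup.cons (by simp [huA, huC]) hnAC)
          simp only [← Multiset.cons_coe, ← Multiset.coe_add, ← Multiset.singleton_add]
          abel
  case pos =>
    -- u ∈ C : C = B ++ u :: D
    obtain ⟨B, D, rfl⟩ := List.append_of_mem huC
    have hvB : v ∉ B := fun h => hvC (by simp [h])
    have hvD : v ∉ D := fun h => hvC (by simp [h])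
    have hnBUD : (B ++ u :: D).Nodup := hnVC.of_cons
    have huB : u ∉ B := fun h => by
      have := List.disjoint_of_nodup_append hnBUD h
      simp at this
    have huD : u ∉ D := (List.nodup_cons.mp hnBUD.of_append_right).1
    have hcBUD : (B ++ u :: D).Chain' (kelmans G u v).Adj := hcVC.tail
    rw [List.Chain', List.isChain_append] at hcBUD
    obtain ⟨hcB, hcUD, hBu0⟩ := hcBUD
    have hBu : ∀ x ∈ B.getLast?, (kelmans G u v).Adj x u := fun x hx => hBu0 x hx u rfl
    have hUD : ∀ y ∈ D.head?, (kelmans G u v).Adj u y := (List.isChain_cons.mp hcUD).1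
    have hcD : D.Chain' (kelmans G u v).Adj := (List.isChain_cons.mp hcUD).2
    have hDg : D.Chain' G.Adj := kel_chain_avoid hcD hvD
    have hBg : B.Chain' G.Adj := kel_chain_avoid hcB hvB
    have hBrev : B.reverse.Chain' G.Adj := chain'_reverse_adj hBg
    have hUDg : ∀ y ∈ D.head?, G.Adj u y ∧ G.Adj v y := fun y hy =>
      kel_E3 huv (hUD y hy) (fun e => hvD (e ▸ List.mem_of_mem_head? hy))
    have hBuG : ∀ x ∈ B.getLast?, G.Adj u x ∧ G.Adj v x := fun x hx =>
      kel_E3 huv ((hBu x hx).symm) (fun e => hvB (e ▸ List.mem_of_mem_getLast? hx))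
    have hVB : ∀ b ∈ B.head?, (kelmans G u v).Adj v b := by
      intro b hb
      refine (List.isChain_cons.mp hcVC).1 b ?_
      rw [List.head?_append, hb]
      rfl
    by_cases hL : ∀ x ∈ A.getLast?, G.Adj x v
    · by_cases hVbG : ∀ b ∈ B.head?, G.Adj v b
      · -- keep l
        refine ⟨A ++ v :: (B ++ u :: D), ?_, hn, le_rfl⟩
        exact chain'_glue hAg hBg hDg hL hVbG (fun m hm => (hBuG m hm).1.symm)
          (fun _ => huv.symm) (fun d hd => (hUDg d hd).1)
      · -- A ++ v :: (B.reverse ++ u :: D)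
        push_neg at hVbG
        obtain ⟨b, hbm, hbn⟩ := hVbG
        have hub : G.Adj u b := kel_E2 (hVB b hbm) hbn
        refine ⟨A ++ v :: (B.reverse ++ u :: D), ?_, ?_, by simp⟩
        · refine chain'_glue hAg hBrev hDg hL ?_ ?_ ?_ (fun d hd => (hUDg d hd).1)
          · intro m hm
            rw [List.head?_reverse] at hm
            exact (hBuG m hm).2
          · intro m hm
            rw [List.getLast?_reverse] at hm
            rw [Option.mem_unique hm hbm]
            exact hub.symm
          · intro h
            rw [List.reverse_eq_nil_iff.mp h] at hbm
            simp at hbm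
        · refine nodup_of_perm_coe ?_ hn
          simp only [← Multiset.cons_coe, ← Multiset.coe_add, ← Multiset.singleton_add,
            Multiset.coe_reverse] <;> abel
    · push_neg at hL
      obtain ⟨a, ham, han⟩ := hL
      have huda : G.Adj u a := kel_E2 ((hAv a ham).symm) (fun h => han h.symm)
      have hAu : ∀ x ∈ A.getLast?, G.Adj x u := by
        intro x hx
        rw [Option.mem_unique hx ham]
        exact huda.symm
      by_cases hVbG : ∀ b ∈ B.head?, G.Adj v b
      · -- A ++ u :: (B.reverse ++ v :: D)
        refine ⟨A ++ u :: (B.reverse ++ v :: D), ?_, ?_, by simp⟩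
        · refine chain'_glue hAg hBrev hDg hAu ?_ ?_ (fun _ => huv)
            (fun d hd => (hUDg d hd).2)
          · intro m hm
            rw [List.head?_reverse] at hm
            exact (hBuG m hm).1
          · intro m hm
            rw [List.getLast?_reverse] at hm
            exact (hVbG m hm).symm
        · refine nodup_of_perm_coe ?_ hn
          simp only [← Multiset.cons_coe, ← Multiset.coe_add, ← Multiset.singleton_add,
            Multiset.coe_reverse] <;> abel
      · -- A ++ u :: (B ++ v :: D)
        push_neg at hVbG
        obtain ⟨b, hbm, hbn⟩ := hVbG
        have hub : G.Adj u b := kel_E2 (hVB b hbm) hbn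
        refine ⟨A ++ u :: (B ++ v :: D), ?_, ?_, by simp⟩
        · refine chain'_glue hAg hBg hDg hAu ?_
            (fun m hm => (hBuG m hm).2.symm) (fun _ => huv) (fun d hd => (hUDg d hd).2)
          intro m hm
          rw [Option.mem_unique hm hbm]
          exact hub
        · refine nodup_of_perm_coe ?_ hn
          simp only [← Multiset.cons_coe, ← Multiset.coe_add, ← Multiset.singleton_add]
          abel

lemma key (huv : G.Adj u v) (l : List V)
    (hc : l.Chain' (kelmans G u v).Adj) (hn : l.Nodup) :
    ∃ l' : List V, l'.Chain' G.Adj ∧ l'.Nodup ∧ l.length ≤ l'.length := by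
  by_cases hvl : v ∈ l
  · obtain ⟨A, C, rfl⟩ := List.append_of_mem hvl
    by_cases huA : u ∈ A
    · have hu' : u ∉ C := by
        intro h
        have := List.disjoint_of_nodup_append hn huA
        simp [h] at this
      have hrc : (C.reverse ++ v :: A.reverse).Chain' (kelmans G u v).Adj := by
        have h2 := List.isChain_reverse.mpr
          (chain'_imp_mem hc (fun a _ b _ h => ((kelmans G u v).adj_symm h : _)))
        simpa [List.Chain', List.reverse_append, List.append_assoc] using h2
      have hrn : (C.reverse ++ v :: A.reverse).Nodup := by
        have := List.nodup_reverse.mpr hn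
        simpa [List.reverse_append, List.append_assoc] using this
      obtain ⟨l', h1, h2, h3⟩ := key' huv C.reverse A.reverse hrc hrn (by simp [hu'])
      refine ⟨l', h1, h2, ?_⟩
      simp only [List.length_append, List.length_cons, List.length_reverse] at h3 ⊢
      omega
    · exact key' huv A C hc hn huA
  · exact ⟨l, kel_chain_avoid hc hvl, hn, le_rfl⟩
end lemmas


/-- The Kelmans transformation does not increase the number of vertices of a
longest path. -/
theorem longestPath_kelmans_le {V : Type*} [Fintype V] (G : SimpleGraph V)
    (u v : V) (huv : G.Adj u v) :
    longestPathVerts (kelmans G u v) ≤ longestPathVerts G := by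
  apply csSup_le'
  rintro n ⟨a, b, p, hp, rfl⟩
  obtain ⟨l', h1, h2, h3⟩ := key huv p.support p.isChain_adj_support hp.support_nodup
  rw [SimpleGraph.Walk.length_support] at h3
  match l', h1, h2, h3 with
  | a' :: t, h1, h2, h3 =>
    obtain ⟨b', q, hq, hs⟩ := exists_walk_of_list G t a' h1 h2
    have hlen : q.length + 1 = (a' :: t).length := by
      rw [← SimpleGraph.Walk.length_support, hs]
    have hb : q.length + 1 ∈
        {n | ∃ (x y : V) (p : G.Walk x y), p.IsPath ∧ p.length + 1 = n} :=
      ⟨a', b', q, hq, rfl⟩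
    refine le_trans (by omega) (le_csSup ⟨Fintype.card V, ?_⟩ hb)
    rintro m ⟨x, y, r, hr, rfl⟩
    have := hr.length_lt
    omega
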